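/- Let S be a cofibrantly generated model category and Φ : (A, B) → (C, D) a morphism of pairs of small categories such that (a) D = Φ(B) as sets of objects, and (b) Φ is left glossy. Then the precomposition functor Φ^* and the right Kan extension Φ_! : S^A → S^C form a Quillen adjunction Φ^* : U_S(C,D) ⇄ U_S(A,B) : Φ_!. In particular, Φ^* preserves cofibrations and fibrations, and a morphism η in S^C is a D-weak equivalence if and only if Φ^*(η) is a B-weak equivalence. -/

import Mathlib

/-! Preliminaries: basic notions of homotopical algebra (lifting properties,
model structures, transfinite compositions, relative cell complexes, smallness,
cofibrant generation) and the relative model structure `U_S(C,D)` on functor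
categories, following Balmer–Matthey, "Codescent theory I". -/

universe w v u u₂ u₃

open CategoryTheory Limits

namespace Codescent

set_option linter.dupNamespace false

section Lifting

variable {M : Type u} [Category.{v} M]

/-- The class of morphisms having the left lifting property with respect to all
morphisms in `K`. -/
def llp (K : MorphismProperty M) : MorphismProperty M :=
  fun _ _ f => ∀ ⦃X Y : M⦄ (g : X ⟶ Y), K g → HasLiftingProperty f g

/-- The class of morphisms having the right lifting property with respect to all
morphisms in `K`. -/
def rlp (K : MorphismProperty M) : MorphismProperty M :=
  fun _ _ g => ∀ ⦃A B : M⦄ (f : A ⟶ B), K f → HasLiftingProperty f g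

/-- Intersection of two classes of morphisms. -/
def inter (P Q : MorphismProperty M) : MorphismProperty M :=
  fun _ _ f => P f ∧ Q f

/-- `f` is a retract of `g` (as objects of the arrow category). -/
def RetractHom {X Y X' Y' : M} (f : X ⟶ Y) (g : X' ⟶ Y') : Prop :=
  ∃ (i : Arrow.mk f ⟶ Arrow.mk g) (r : Arrow.mk g ⟶ Arrow.mk f), i ≫ r = 𝟙 (Arrow.mk f)

/-- The object `c` is a retract of the object `d`. -/
def IsRetractObj (c d : M) : Prop :=
  ∃ (i : c ⟶ d) (r : d ⟶ c), i ≫ r = 𝟙 c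

/-- A functorial factorization of every morphism as a morphism in `L` followed by
a morphism in `R`. -/
structure FunctorialFact (L R : MorphismProperty M) where
  Z : Arrow M ⥤ M
  ι : (Arrow.leftFunc : Arrow M ⥤ M) ⟶ Z
  π : Z ⟶ (Arrow.rightFunc : Arrow M ⥤ M)
  fac : ∀ f : Arrow M, ι.app f ≫ π.app f = f.hom
  mem_left : ∀ f : Arrow M, L (ι.app f)
  mem_right : ∀ f : Arrow M, R (π.app f)

end Lifting

/-- A (Quillen) model structure on a category `M`: classes of weak equivalences,
cofibrations and fibrations satisfying MC2–MC5 (MC1, completeness and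
cocompleteness, is imposed separately as `HasLimits`/`HasColimits`). -/
structure ModelStructure (M : Type u) [Category.{v} M] where
  weq : MorphismProperty M
  cof : MorphismProperty M
  fib : MorphismProperty M
  /-- MC2, two-out-of-three -/
  weq_comp : ∀ {X Y Z : M} (f : X ⟶ Y) (g : Y ⟶ Z), weq f → weq g → weq (f ≫ g)
  weq_cancel_left : ∀ {X Y Z : M} (f : X ⟶ Y) (g : Y ⟶ Z), weq f → weq (f ≫ g) → weq g
  weq_cancel_right : ∀ {X Y Z : M} (f : X ⟶ Y) (g : Y ⟶ Z), weq g → weq (f ≫ g) → weq f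
  /-- MC3, closure under retracts -/
  weq_retract : ∀ {X Y X' Y' : M} (f : X ⟶ Y) (g : X' ⟶ Y'), RetractHom f g → weq g → weq f
  cof_retract : ∀ {X Y X' Y' : M} (f : X ⟶ Y) (g : X' ⟶ Y'), RetractHom f g → cof g → cof f
  fib_retract : ∀ {X Y X' Y' : M} (f : X ⟶ Y) (g : X' ⟶ Y'), RetractHom f g → fib g → fib f
  /-- MC4, lifting -/
  cof_lift : ∀ {A B X Y : M} (f : A ⟶ B) (g : X ⟶ Y),
    cof f → weq g → fib g → HasLiftingProperty f g
  fib_lift : ∀ {A B X Y : M} (f : A ⟶ B) (g : X ⟶ Y),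
    weq f → cof f → fib g → HasLiftingProperty f g
  /-- MC5, functorial factorizations -/
  fact₁ : FunctorialFact (M := M) cof (inter weq fib)
  fact₂ : FunctorialFact (M := M) (inter weq cof) fib

section Transfinite

/-- A well-ordered type (with bottom element and successors), the index for
transfinite compositions (a "λ-sequence" index). -/
structure WOType : Type (w + 1) where
  carrier : Type w
  [lin : LinearOrder carrier]
  [succ : SuccOrder carrier]
  [bot : OrderBot carrier]
  [wf : WellFoundedLT carrier]

attribute [instance] WOType.lin WOType.succ WOType.bot WOType.wf

variable {M : Type u} [Category.{v} M] {N : Type u₂} [Category.{v} N]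

/-- The class of pushouts of morphisms of `K`. -/
def pushoutsOf (K : MorphismProperty M) : MorphismProperty M :=
  fun X Y f => ∃ (A B : M) (g : A ⟶ B) (t : A ⟶ X) (b : B ⟶ Y), K g ∧ IsPushout g t b f

/-- The inclusion functor of `{i // i < j}` into a preorder `J`. -/
def iioIncl {J : Type w} [Preorder J] (j : J) : {i : J // i < j} ⥤ J where
  obj i := i.1
  map {i i'} h := homOfLE (Subtype.coe_le_coe.mpr (leOfHom h))

/-- The cocone on the restriction of `F : J ⥤ M` to `{i // i < j}` with apex `F.obj j`. -/
def iioCocone {J : Type w} [Preorder J] (F : J ⥤ M) (j : J) : Cocone (iioIncl j ⋙ F) where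
  pt := F.obj j
  ι :=
    { app := fun i => F.map (homOfLE i.2.le)
      naturality := fun i i' h => by
        dsimp
        rw [Category.comp_id, ← F.map_comp]
        rfl }

/-- `F : J ⥤ M` is a (continuous) transfinite sequence all of whose successor
maps lie in the class `P`. -/
structure IsChainOf (P : MorphismProperty M) {J : Type w} [LinearOrder J] [SuccOrder J]
    (F : J ⥤ M) : Prop where
  succ_mem : ∀ j : J, ¬ IsMax j → P (F.map (homOfLE (Order.le_succ j)))
  limit_isColimit : ∀ j : J, Order.IsSuccLimit j → Nonempty (IsColimit (iioCocone F j))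

/-- The class of relative `K`-cells: transfinite compositions of pushouts of
morphisms of `K`. -/
def cell (K : MorphismProperty M) : MorphismProperty M :=
  fun X Y f => ∃ (J : WOType.{v}) (F : J.carrier ⥤ M)
    (_ : IsChainOf (pushoutsOf K) F) (c : Cocone F) (_ : IsColimit c)
    (e : X ≅ F.obj ⊥) (e' : c.pt ≅ Y), f = e.hom ≫ c.ι.app ⊥ ≫ e'.hom

/-- A linear order is `κ`-filtered when it has no top element and every subset of
cardinality at most `κ` is bounded above. -/
def KFiltered (κ : Cardinal.{w}) (J : Type w) [LinearOrder J] : Prop :=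
  (∀ j : J, ∃ j' : J, j < j') ∧
    ∀ s : Set J, Cardinal.mk s ≤ κ → ∃ j : J, ∀ i ∈ s, i ≤ j

/-- The object `d` is small relative to the class `K`: for some cardinal `κ`,
morphisms from `d` into the colimit of any `κ`-filtered well-ordered continuous
sequence with successor maps in `K` factor, essentially uniquely, through some
stage of the sequence. -/
def IsSmallRel (d : M) (K : MorphismProperty M) : Prop :=
  ∃ κ : Cardinal.{v}, ∀ (J : WOType.{v}), KFiltered κ J.carrier →
    ∀ (F : J.carrier ⥤ M), IsChainOf K F →
    ∀ (c : Cocone F), IsColimit c →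
      (∀ g : d ⟶ c.pt, ∃ (j : J.carrier) (h : d ⟶ F.obj j), h ≫ c.ι.app j = g) ∧
      (∀ (j j' : J.carrier) (h : d ⟶ F.obj j) (h' : d ⟶ F.obj j'),
        h ≫ c.ι.app j = h' ≫ c.ι.app j' →
          ∃ (k : J.carrier) (l : j ≤ k) (l' : j' ≤ k),
            h ≫ F.map (homOfLE l) = h' ≫ F.map (homOfLE l'))

/-- The model structure `P` is cofibrantly generated, with set of generating
cofibrations `I` and set of generating trivial cofibrations `J`. -/
structure IsCofGen (P : ModelStructure M) (I J : MorphismProperty M) : Prop where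
  small_I : ∀ ⦃X Y : M⦄ (f : X ⟶ Y), I f → IsSmallRel X (cell I)
  small_J : ∀ ⦃X Y : M⦄ (f : X ⟶ Y), J f → IsSmallRel X (cell J)
  fib_eq : P.fib = rlp J
  trivFib_eq : inter P.weq P.fib = rlp I

/-- A functor preserves pushouts. -/
def PreservesPushouts (G : M ⥤ N) : Prop :=
  ∀ ⦃Z X Y P : M⦄ (f : Z ⟶ X) (g : Z ⟶ Y) (inl : X ⟶ P) (inr : Y ⟶ P),
    IsPushout f g inl inr → IsPushout (G.map f) (G.map g) (G.map inl) (G.map inr)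

/-- A functor preserves transfinite compositions: it preserves colimits of
diagrams indexed by well-ordered types. -/
def PreservesTransfiniteCompositions (G : M ⥤ N) : Prop :=
  ∀ (J : Type v) [LinearOrder J] [WellFoundedLT J] (F : J ⥤ M) (c : Cocone F),
    IsColimit c → Nonempty (IsColimit (G.mapCocone c))

/-- The image `{G(f) | f ∈ K}` of a class of morphisms under a functor. -/
def strictImage (G : M ⥤ N) (K : MorphismProperty M) : MorphismProperty N :=
  fun _ _ g => ∃ (A B : M) (f : A ⟶ B), K f ∧ Arrow.mk (G.map f) = Arrow.mk g

end Transfinite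

section CofRep

variable {M : Type u} [Category.{v} M]

/-- The cofibrant replacement of `X` given by the functorial factorization of
`∅ ⟶ X`. -/
noncomputable def cofRep (P : ModelStructure M) [HasInitial M] (X : M) : M :=
  P.fact₁.Z.obj (Arrow.mk (initial.to X))

/-- The canonical trivial fibration `QX ⟶ X` from the cofibrant replacement. -/
noncomputable def cofRepHom (P : ModelStructure M) [HasInitial M] (X : M) :
    cofRep P X ⟶ X :=
  P.fact₁.π.app (Arrow.mk (initial.to X))

/-- The functor `X ↦ (∅ ⟶ X)` to the arrow category. -/
noncomputable def toArrowInit (M : Type u) [Category.{v} M] [HasInitial M] : M ⥤ Arrow M where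
  obj X := Arrow.mk (initial.to X)
  map {X Y} f := Arrow.homMk (u := 𝟙 _) (v := f) (by apply initial.hom_ext)

/-- The cofibrant replacement functor of the model structure `P`. -/
noncomputable def qFunctor (P : ModelStructure M) [HasInitial M] : M ⥤ M :=
  toArrowInit M ⋙ P.fact₁.Z

end CofRep

section FunctorCat

variable {S : Type u} [Category.{v} S]

/-- The class of morphisms in `S^C` that belong objectwise on `D` to the class `P`;
for `P` the weak equivalences (resp. fibrations) of a model structure these are
the `D`-weak equivalences (resp. the `D`-fibrations). -/
def objProp {C : Type v} [SmallCategory C] (P : MorphismProperty S) (D : Set C) :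
    MorphismProperty (C ⥤ S) :=
  fun _ _ η => ∀ d ∈ D, P (η.app d)

/-- Trivial `D`-fibrations in `S^C`. -/
def dTrivFib {C : Type v} [SmallCategory C] (P : ModelStructure S) (D : Set C) :
    MorphismProperty (C ⥤ S) :=
  inter (objProp P.weq D) (objProp P.fib D)

/-- `D`-cofibrations in `S^C`: the morphisms having the left lifting property with
respect to all trivial `D`-fibrations. -/
def dCof {C : Type v} [SmallCategory C] (P : ModelStructure S) (D : Set C) :
    MorphismProperty (C ⥤ S) :=
  llp (dTrivFib P D)

variable [HasColimits S]

/-- `D`-cofibrant objects of `S^C`. -/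
def dCofibrant {C : Type v} [SmallCategory C] (P : ModelStructure S) (D : Set C)
    (X : C ⥤ S) : Prop :=
  dCof P D (initial.to X)

/-- The model structure `U_S(C,D)` on `S^C`: a model structure whose weak
equivalences are the `D`-weak equivalences, whose fibrations are the
`D`-fibrations and whose cofibrations are the `D`-cofibrations. -/
structure RelStructure (P : ModelStructure S) (C : Type v) [SmallCategory C] (D : Set C) where
  N : ModelStructure (C ⥤ S)
  weq_eq : N.weq = objProp P.weq D
  fib_eq : N.fib = objProp P.fib D
  cof_eq : N.cof = dCof P D

/-- `X` satisfies `D`-codescent at `c`: the cofibrant replacement morphism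
`Q_{C,D} X ⟶ X` in `U_S(C,D)` is a weak equivalence at `c`. -/
def CodescentAt {C : Type v} [SmallCategory C] (P : ModelStructure S) {D : Set C}
    (U : RelStructure P C D) (X : C ⥤ S) (c : C) : Prop :=
  P.weq ((cofRepHom U.N X).app c)

/-- `X` satisfies `D`-codescent: the cofibrant replacement morphism
`Q_{C,D} X ⟶ X` is a `C`-weak equivalence. -/
def Codescent {C : Type v} [SmallCategory C] (P : ModelStructure S) {D : Set C}
    (U : RelStructure P C D) (X : C ⥤ S) : Prop :=
  ∀ c : C, CodescentAt P U X c

/-- The coproduct property for weak equivalences. -/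
def CoproductProperty (P : ModelStructure S) : Prop :=
  ∀ (ι : Type v) (X Y : ι → S) (f : ∀ i, X i ⟶ Y i),
    (∀ i, P.weq (f i)) ↔ P.weq (Limits.Sigma.map f)

end FunctorCat

section Pairs

variable {A : Type v} [SmallCategory A] {C : Type v} [SmallCategory C]

/-- Two subsets of objects are retract equivalent. -/
def RetractEquiv (D D' : Set C) : Prop :=
  (∀ d ∈ D, ∃ d' ∈ D', IsRetractObj d d') ∧ (∀ d' ∈ D', ∃ d ∈ D, IsRetractObj d' d)

/-- `Φ : (A,B) ⟶ (C,D)` is left glossy. -/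
def LeftGlossy (Φ : A ⥤ C) (B : Set A) : Prop :=
  ∀ b ∈ B, ∃ (ι : Type v) (tgt : ι → A) (β : ∀ i, Φ.obj b ⟶ Φ.obj (tgt i)),
    (∀ i, tgt i ∈ B) ∧
      ∀ (a : A) (α : Φ.obj b ⟶ Φ.obj a),
        ∃! p : (i : ι) × (tgt i ⟶ a), β p.1 ≫ Φ.map p.2 = α

/-- `Φ : (A,B) ⟶ (C,D)` is right glossy. -/
def RightGlossy (Φ : A ⥤ C) (B : Set A) : Prop :=
  ∀ b ∈ B, ∃ (ι : Type v) (src : ι → A) (β : ∀ j, Φ.obj (src j) ⟶ Φ.obj b),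
    (∀ j, src j ∈ B) ∧
      ∀ (a : A) (α : Φ.obj a ⟶ Φ.obj b),
        ∃! p : (j : ι) × (a ⟶ src j), Φ.map p.2 ≫ β p.1 = α

/-- A subset of objects is left absorbant: the source of any morphism whose
target lies in the subset also lies in the subset. -/
def LeftAbsorbant (D : Set C) : Prop :=
  ∀ ⦃c c' : C⦄, (c ⟶ c') → c' ∈ D → c ∈ D

end Pairs

end Codescent
open Codescent

section AuxLift


lemma ran_app_lift {S : Type u} [Category.{v} S] [HasLimits S]
    {A : Type v} [SmallCategory A] {C : Type v} [SmallCategory C]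
    (Φ : A ⥤ C) {X Y : A ⥤ S} (g : X ⟶ Y) (b : A)
    (ι : Type v) (tgt : ι → A) (β : ∀ i, Φ.obj b ⟶ Φ.obj (tgt i))
    (hfac : ∀ (a : A) (α : Φ.obj b ⟶ Φ.obj a),
      ∃! p : (i : ι) × (tgt i ⟶ a), β p.1 ≫ Φ.map p.2 = α)
    {s t : S} (f : s ⟶ t) (hlift : ∀ i, HasLiftingProperty f (g.app (tgt i))) :
    HasLiftingProperty f ((Φ.ran.map g).app (Φ.obj b)) := by
  classical
  -- projection maps
  set PX : ∀ j : StructuredArrow (Φ.obj b) Φ, (Φ.ran.obj X).obj (Φ.obj b) ⟶ X.obj j.right :=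
    fun j => (Φ.ran.obj X).map j.hom ≫ (Φ.ranCounit.app X).app j.right with hPX
  set PY : ∀ j : StructuredArrow (Φ.obj b) Φ, (Φ.ran.obj Y).obj (Φ.obj b) ⟶ Y.obj j.right :=
    fun j => (Φ.ran.obj Y).map j.hom ≫ (Φ.ranCounit.app Y).app j.right with hPY
  have PXnat : ∀ (j j' : StructuredArrow (Φ.obj b) Φ) (m : j ⟶ j'),
      PX j ≫ X.map m.right = PX j' := by
    intro j j' m
    have hw : j.hom ≫ Φ.map m.right = j'.hom := StructuredArrow.w m
    have hc := (Φ.ranCounit.app X).naturality m.right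
    dsimp at hc
    rw [hPX]
    dsimp
    rw [Category.assoc, ← hc, ← Category.assoc, ← Functor.map_comp, hw]
  have PYnat : ∀ (j j' : StructuredArrow (Φ.obj b) Φ) (m : j ⟶ j'),
      PY j ≫ Y.map m.right = PY j' := by
    intro j j' m
    have hw : j.hom ≫ Φ.map m.right = j'.hom := StructuredArrow.w m
    have hc := (Φ.ranCounit.app Y).naturality m.right
    dsimp at hc
    rw [hPY]
    dsimp
    rw [Category.assoc, ← hc, ← Category.assoc, ← Functor.map_comp, hw]
  have Pg : ∀ j : StructuredArrow (Φ.obj b) Φ,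
      (Φ.ran.map g).app (Φ.obj b) ≫ PY j = PX j ≫ g.app j.right := by
    intro j
    have h1 := ((Φ.ran.map g).naturality j.hom).symm
    have h2 := congr_app (Φ.ranCounit.naturality g) j.right
    dsimp at h1 h2
    rw [hPX, hPY]
    dsimp
    rw [← Category.assoc, h1, Category.assoc, h2, Category.assoc]
  -- chosen factorizations
  set sec : ∀ j : StructuredArrow (Φ.obj b) Φ, (i : ι) × (tgt i ⟶ j.right) :=
    fun j => (hfac j.right j.hom).choose with hsecdef
  have hsec : ∀ j, β (sec j).1 ≫ Φ.map (sec j).2 = j.hom :=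
    fun j => (hfac j.right j.hom).choose_spec.1
  have huniq : ∀ (j : StructuredArrow (Φ.obj b) Φ) (p : (i : ι) × (tgt i ⟶ j.right)),
      β p.1 ≫ Φ.map p.2 = j.hom → p = sec j :=
    fun j p hp => (hfac j.right j.hom).choose_spec.2 p hp
  constructor
  intro u v sq
  -- lifts at each i
  have sqi : ∀ i : ι, CommSq (u ≫ PX (StructuredArrow.mk (β i))) f (g.app (tgt i))
      (v ≫ PY (StructuredArrow.mk (β i))) := by
    intro i
    constructor
    have hp := Pg (StructuredArrow.mk (β i))
    dsimp at hp
    rw [Category.assoc, ← hp, ← Category.assoc, sq.w, Category.assoc]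
  set l : ∀ i : ι, t ⟶ X.obj (tgt i) := fun i => ((hlift i).sq_hasLift (sqi i)).exists_lift.some.l
    with hldef
  have hl₁ : ∀ i, f ≫ l i = u ≫ PX (StructuredArrow.mk (β i)) :=
    fun i => ((hlift i).sq_hasLift (sqi i)).exists_lift.some.fac_left
  have hl₂ : ∀ i, l i ≫ g.app (tgt i) = v ≫ PY (StructuredArrow.mk (β i)) :=
    fun i => ((hlift i).sq_hasLift (sqi i)).exists_lift.some.fac_right
  -- morphisms from the chosen objects
  have PXsec : ∀ j : StructuredArrow (Φ.obj b) Φ,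
      PX (StructuredArrow.mk (β (sec j).1)) ≫ X.map (sec j).2 = PX j :=
    fun j => by
      have h := PXnat (StructuredArrow.mk (β (sec j).1)) j
        (StructuredArrow.homMk (sec j).2 (by simpa using hsec j))
      simpa only [StructuredArrow.homMk_right] using h
  have PYsec : ∀ j : StructuredArrow (Φ.obj b) Φ,
      PY (StructuredArrow.mk (β (sec j).1)) ≫ Y.map (sec j).2 = PY j :=
    fun j => by
      have h := PYnat (StructuredArrow.mk (β (sec j).1)) j
        (StructuredArrow.homMk (sec j).2 (by simpa using hsec j))
      simpa only [StructuredArrow.homMk_right] using h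
  -- the cone
  set cone : Cone (StructuredArrow.proj (Φ.obj b) Φ ⋙ X) :=
    { pt := t
      π :=
        { app := fun j => l (sec j).1 ≫ X.map (sec j).2
          naturality := by
            intro j j' m
            dsimp
            rw [Category.id_comp]
            have hp : β (sec j).1 ≫ Φ.map ((sec j).2 ≫ m.right) = j'.hom := by
              rw [Φ.map_comp, ← Category.assoc, hsec j, StructuredArrow.w m]
            have := huniq j' ⟨(sec j).1, (sec j).2 ≫ m.right⟩ hp
            rw [← this]
            dsimp
            rw [Category.assoc]
            exact congrArg (l (sec j).1 ≫ ·) (X.map_comp _ _) } } with hconedef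
  have hcone : ∀ j, cone.π.app j = l (sec j).1 ≫ X.map (sec j).2 := fun j => rfl
  -- the lift
  set e := Φ.ranObjObjIsoLimit X (Φ.obj b) with hedef
  set eY := Φ.ranObjObjIsoLimit Y (Φ.obj b) with heYdef
  have he : ∀ j, e.hom ≫ limit.π _ j = PX j := fun j => Φ.ranObjObjIsoLimit_hom_π X (Φ.obj b) j
  have heY : ∀ j, eY.hom ≫ limit.π _ j = PY j := fun j => Φ.ranObjObjIsoLimit_hom_π Y (Φ.obj b) j
  set L : t ⟶ (Φ.ran.obj X).obj (Φ.obj b) := limit.lift _ cone ≫ e.inv with hLdef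
  have hLe : L ≫ e.hom = limit.lift _ cone := by
    rw [hLdef, Category.assoc, e.inv_hom_id, Category.comp_id]
  have hLP : ∀ j, L ≫ PX j = cone.π.app j := by
    intro j
    erw [← he j, ← Category.assoc, hLe, limit.lift_π]
  refine ⟨⟨⟨L, ?_, ?_⟩⟩⟩
  · -- f ≫ L = u
    apply (cancel_mono e.hom).1
    apply limit.hom_ext
    intro j
    simp only [Category.assoc]
    erw [he j, hLP j, hcone j, ← Category.assoc, hl₁ ((sec j).1), Category.assoc, PXsec j]
  · -- L ≫ (ran g).app = v
    apply (cancel_mono eY.hom).1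
    apply limit.hom_ext
    intro j
    simp only [Category.assoc]
    erw [heY j, Pg j, ← Category.assoc, hLP j, hcone j, Category.assoc, g.naturality,
      ← Category.assoc, hl₂ ((sec j).1), Category.assoc, PYsec j]

end AuxLift


/-- for a left glossy morphism of pairs with `D = Φ(B)`, the
functors `Φ^*` and `Φ_!` form a Quillen adjunction `U_S(C,D) ⇄ U_S(A,B)`
(Balmer–Matthey, Theorem 7.6). -/
theorem statement_11 {S : Type u} [Category.{v} S] [HasLimits S] [HasColimits S]
    (P : ModelStructure S) (I J : MorphismProperty S) (hcg : IsCofGen P I J)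
    {A : Type v} [SmallCategory A] {C : Type v} [SmallCategory C]
    (Φ : A ⥤ C) (B : Set A) (D : Set C)
    (hD : D = Φ.obj '' B) (hgl : LeftGlossy Φ B) :
    Nonempty ((Functor.whiskeringLeft A C S).obj Φ ⊣ Φ.ran) ∧
    (∀ ⦃X Y : C ⥤ S⦄ (η : X ⟶ Y), dCof P D η →
      dCof P B (((Functor.whiskeringLeft A C S).obj Φ).map η)) ∧
    (∀ ⦃X Y : C ⥤ S⦄ (η : X ⟶ Y), objProp P.weq D η → dCof P D η →
      objProp P.weq B (((Functor.whiskeringLeft A C S).obj Φ).map η) ∧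
        dCof P B (((Functor.whiskeringLeft A C S).obj Φ).map η)) ∧
    (∀ ⦃X Y : C ⥤ S⦄ (η : X ⟶ Y), objProp P.fib D η →
      objProp P.fib B (((Functor.whiskeringLeft A C S).obj Φ).map η)) ∧
    (∀ ⦃X Y : C ⥤ S⦄ (η : X ⟶ Y),
      objProp P.weq D η ↔ objProp P.weq B (((Functor.whiskeringLeft A C S).obj Φ).map η)) := by
  classical
  have key : ∀ {X Y : A ⥤ S} (g : X ⟶ Y), dTrivFib P B g →
      ∀ d ∈ D, inter P.weq P.fib ((Φ.ran.map g).app d) := by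
    intro X Y g hg d hd
    rw [hD] at hd
    obtain ⟨b, hb, rfl⟩ := hd
    rw [hcg.trivFib_eq]
    intro s t f hf
    obtain ⟨ι, tgt, β, htgt, hfac⟩ := hgl b hb
    refine ran_app_lift Φ g b ι tgt β hfac f (fun i => ?_)
    have h1 : inter P.weq P.fib (g.app (tgt i)) :=
      ⟨hg.1 (tgt i) (htgt i), hg.2 (tgt i) (htgt i)⟩
    rw [hcg.trivFib_eq] at h1
    exact h1 f hf
  have cof2 : ∀ ⦃X Y : C ⥤ S⦄ (η : X ⟶ Y), dCof P D η →
      dCof P B (((Functor.whiskeringLeft A C S).obj Φ).map η) := by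
    intro X Y η hη X' Y' g hg
    rw [(Φ.ranAdjunction S).hasLiftingProperty_iff]
    exact hη (Φ.ran.map g) ⟨fun d hd => (key g hg d hd).1, fun d hd => (key g hg d hd).2⟩
  have weqf : ∀ ⦃X Y : C ⥤ S⦄ (η : X ⟶ Y), objProp P.weq D η →
      objProp P.weq B (((Functor.whiskeringLeft A C S).obj Φ).map η) := by
    intro X Y η h b hb
    exact h (Φ.obj b) (by rw [hD]; exact ⟨b, hb, rfl⟩)
  refine ⟨⟨Φ.ranAdjunction S⟩, cof2, fun X Y η hw hc => ⟨weqf η hw, cof2 η hc⟩,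
    ?_, fun X Y η => ⟨weqf η, ?_⟩⟩
  · intro X Y η h b hb
    exact h (Φ.obj b) (by rw [hD]; exact ⟨b, hb, rfl⟩)
  · intro h d hd
    rw [hD] at hd
    obtain ⟨b, hb, rfl⟩ := hd
    exact h b hb
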